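/- Let Φ(t) = (2π)^{−1/2} ∫_{−∞}^{t} e^{−u²/2} du be the standard normal cumulative distribution function. Then ∫_{−∞}^{∞} Φ(t)·Φ(−t) dt = 1/√π. -/

import Mathlib

open MeasureTheory Set Filter Topology

noncomputable section

/-- The standard normal cumulative distribution function. -/
def stdGaussCDF (t : ℝ) : ℝ :=
  ∫ u in Set.Iic t, Real.exp (-u ^ 2 / 2) / Real.sqrt (2 * Real.pi)

namespace SG

def pdf (u : ℝ) : ℝ := Real.exp (-u ^ 2 / 2) / Real.sqrt (2 * Real.pi)

lemma pdf_pos (u : ℝ) : 0 < pdf u := by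
  unfold pdf
  positivity

lemma pdf_nonneg (u : ℝ) : 0 ≤ pdf u := (pdf_pos u).le

lemma continuous_pdf : Continuous pdf := by
  unfold pdf; fun_prop

lemma pdf_even (u : ℝ) : pdf (-u) = pdf u := by simp [pdf]

lemma integrable_pdf : Integrable pdf := by
  have : Integrable (fun u : ℝ => Real.exp (-(2⁻¹ : ℝ) * u ^ 2)) :=
    integrable_exp_neg_mul_sq (by norm_num)
  have h := this.div_const (Real.sqrt (2 * Real.pi))
  refine h.congr (Eventually.of_forall fun u => ?_)
  unfold pdf; ring_nf

lemma integral_pdf : ∫ u : ℝ, pdf u = 1 := by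
  unfold pdf
  rw [integral_div]
  have : ∀ u : ℝ, Real.exp (-u ^ 2 / 2) = Real.exp (-(2⁻¹ : ℝ) * u ^ 2) := by
    intro u; ring_nf
  simp_rw [this, integral_gaussian]
  rw [div_eq_one_iff_eq (by positivity)]
  rw [show (2:ℝ)*Real.pi = Real.pi * 2⁻¹⁻¹ by norm_num; ring, Real.sqrt_div' _ (by norm_num)]
  norm_num

lemma integrable_mul_pdf : Integrable (fun u => u * pdf u) := by
  have : Integrable (fun u : ℝ => u * Real.exp (-(2⁻¹ : ℝ) * u ^ 2)) :=
    integrable_mul_exp_neg_mul_sq (by norm_num)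
  refine (this.div_const (Real.sqrt (2 * Real.pi))).congr (Eventually.of_forall fun u => ?_)
  unfold pdf; ring_nf

lemma cdf_eq (t : ℝ) : stdGaussCDF t = ∫ u in Iic t, pdf u := rfl

lemma hasDerivAt_pdf (u : ℝ) : HasDerivAt pdf (-(u * pdf u)) u := by
  have h1 : HasDerivAt (fun u : ℝ => -u ^ 2 / 2) (-u) u := by
    have := ((hasDerivAt_pow 2 u).neg).div_const 2
    refine this.congr_deriv ?_
    simp; ring
  have h2 := (h1.exp).div_const (Real.sqrt (2 * Real.pi))
  refine h2.congr_deriv ?_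
  unfold pdf; ring



lemma cdf_sub (a t : ℝ) : stdGaussCDF t = stdGaussCDF a + ∫ u in a..t, pdf u := by
  rw [cdf_eq, cdf_eq, ← intervalIntegral.integral_Iic_sub_Iic
    integrable_pdf.integrableOn integrable_pdf.integrableOn]
  ring

lemma hasDerivAt_cdf (t : ℝ) : HasDerivAt stdGaussCDF (pdf t) t := by
  have : ∀ x, stdGaussCDF x = stdGaussCDF 0 + ∫ u in (0:ℝ)..x, pdf u := fun x => cdf_sub 0 x
  rw [funext this]
  have h := intervalIntegral.integral_hasDerivAt_right
    (integrable_pdf.intervalIntegrable (a := 0) (b := t))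
    (continuous_pdf.stronglyMeasurableAtFilter _ _)
    continuous_pdf.continuousAt
  simpa using h.const_add (stdGaussCDF 0)

lemma continuous_cdf : Continuous stdGaussCDF :=
  continuous_iff_continuousAt.2 fun t => (hasDerivAt_cdf t).continuousAt

lemma cdf_nonneg (t : ℝ) : 0 ≤ stdGaussCDF t := by
  rw [cdf_eq]
  exact setIntegral_nonneg measurableSet_Iic fun u _ => pdf_nonneg u

lemma cdf_le_one (t : ℝ) : stdGaussCDF t ≤ 1 := by
  rw [cdf_eq, ← integral_pdf]
  exact setIntegral_le_integral integrable_pdf (Eventually.of_forall pdf_nonneg)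

lemma cdf_neg (t : ℝ) : stdGaussCDF (-t) = ∫ u in Ioi t, pdf u := by
  rw [cdf_eq]
  have := integral_comp_neg_Iic (-t) pdf
  simp only [pdf_even, neg_neg] at this
  exact this

lemma cdf_neg_eq (t : ℝ) : stdGaussCDF (-t) = 1 - stdGaussCDF t := by
  rw [cdf_neg, eq_sub_iff_add_eq, cdf_eq, add_comm, ← integral_pdf]
  exact intervalIntegral.integral_Iic_add_Ioi integrable_pdf.integrableOn integrable_pdf.integrableOn

lemma tendsto_pdf_atTop : Tendsto pdf atTop (𝓝 0) := by
  unfold pdf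
  rw [show (0:ℝ) = 0 / Real.sqrt (2 * Real.pi) by simp]
  apply Tendsto.div_const
  apply Real.tendsto_exp_atBot.comp
  have : Tendsto (fun u : ℝ => u ^ 2 / 2) atTop atTop :=
    (tendsto_pow_atTop (by norm_num)).atTop_div_const (by norm_num)
  have h2 : Tendsto (fun u : ℝ => -(u ^ 2 / 2)) atTop atBot := tendsto_neg_atBot_iff.mpr this
  refine h2.congr fun u => by ring

lemma tendsto_pdf_atBot : Tendsto pdf atBot (𝓝 0) := by
  have := tendsto_pdf_atTop.comp tendsto_neg_atBot_atTop
  exact this.congr fun u => pdf_even u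

lemma tendsto_cdf_atTop : Tendsto stdGaussCDF atTop (𝓝 1) := by
  have h : Tendsto (fun t : ℝ => ∫ u in (0:ℝ)..t, pdf u) atTop
      (𝓝 (∫ u in Ioi (0:ℝ), pdf u)) :=
    intervalIntegral_tendsto_integral_Ioi 0 integrable_pdf.integrableOn tendsto_id
  have h2 := h.const_add (stdGaussCDF 0)
  have he : stdGaussCDF 0 + ∫ u in Ioi (0:ℝ), pdf u = 1 := by
    rw [cdf_eq, ← integral_pdf]
    exact intervalIntegral.integral_Iic_add_Ioi integrable_pdf.integrableOn
      integrable_pdf.integrableOn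
  rw [he] at h2
  exact h2.congr fun t => (cdf_sub 0 t).symm

lemma tendsto_cdf_atBot : Tendsto stdGaussCDF atBot (𝓝 0) := by
  have h : Tendsto (fun t : ℝ => ∫ u in t..(0:ℝ), pdf u) atBot
      (𝓝 (∫ u in Iic (0:ℝ), pdf u)) :=
    intervalIntegral_tendsto_integral_Iic 0 integrable_pdf.integrableOn tendsto_id
  have h2 := (h.const_sub (stdGaussCDF 0))
  rw [cdf_eq (0:ℝ)] at h2
  simp only [sub_self] at h2
  refine h2.congr fun t => ?_
  rw [show stdGaussCDF t = stdGaussCDF 0 + ∫ u in (0:ℝ)..t, pdf u from cdf_sub 0 t,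
    cdf_eq (0:ℝ), intervalIntegral.integral_symm]
  ring

lemma tail_integral (s : ℝ) : ∫ u in Iic s, -(u * pdf u) = pdf s := by
  have := integral_Iic_of_hasDerivAt_of_tendsto' (a := s)
    (f := pdf) (f' := fun u => -(u * pdf u))
    (fun x _ => hasDerivAt_pdf x) (integrable_mul_pdf.neg.integrableOn) tendsto_pdf_atBot
  simpa using this

lemma mul_cdf_le (t : ℝ) (ht : 0 < t) : t * stdGaussCDF (-t) ≤ pdf t := by
  rw [cdf_eq, ← integral_const_mul]
  rw [← pdf_even t, ← tail_integral (-t)]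
  apply setIntegral_mono_on
  · exact (integrable_pdf.const_mul t).integrableOn
  · exact integrable_mul_pdf.neg.integrableOn
  · exact measurableSet_Iic
  · intro u hu
    simp only [mem_Iic] at hu
    have h1 : t ≤ -u := by linarith
    nlinarith [pdf_nonneg u]

lemma tendsto_mul_cdf : Tendsto (fun t => t * stdGaussCDF (-t)) atTop (𝓝 0) := by
  refine squeeze_zero' ?_ ?_ tendsto_pdf_atTop
  · filter_upwards [eventually_gt_atTop 0] with t ht
    exact mul_nonneg ht.le (cdf_nonneg _)
  · filter_upwards [eventually_gt_atTop 0] with t ht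
    exact mul_cdf_le t ht

lemma pdf_sqrt_two (t : ℝ) :
    pdf (Real.sqrt 2 * t) * Real.sqrt 2 / Real.sqrt Real.pi = 2 * pdf t ^ 2 := by
  unfold pdf
  have h2 : Real.sqrt (2 * Real.pi) = Real.sqrt 2 * Real.sqrt Real.pi :=
    Real.sqrt_mul (by norm_num) _
  have ht : (Real.sqrt 2 * t) ^ 2 = 2 * t ^ 2 := by
    rw [mul_pow, Real.sq_sqrt (by norm_num : (0:ℝ) ≤ 2)]
  have he : Real.exp (-t ^ 2 / 2) ^ 2 = Real.exp (-(2 * t ^ 2) / 2) := by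
    rw [← Real.exp_nat_mul]
    congr 1
    push_cast
    ring
  have hπ : Real.sqrt Real.pi * Real.sqrt Real.pi = Real.pi :=
    Real.mul_self_sqrt Real.pi_pos.le
  have hs2 : Real.sqrt 2 > 0 := Real.sqrt_pos.mpr (by norm_num)
  have hsπ : Real.sqrt Real.pi > 0 := Real.sqrt_pos.mpr Real.pi_pos
  have h22 : Real.sqrt 2 * Real.sqrt 2 = 2 := Real.mul_self_sqrt (by norm_num)
  rw [ht, h2, div_pow, he]
  rw [mul_pow]
  rw [show (Real.sqrt 2) ^ 2 = Real.sqrt 2 * Real.sqrt 2 by ring,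
    show (Real.sqrt Real.pi) ^ 2 = Real.sqrt Real.pi * Real.sqrt Real.pi by ring, h22, hπ]
  field_simp
  ring_nf
  rw [Real.sq_sqrt Real.pi_pos.le]

def H (t : ℝ) : ℝ :=
  t * (stdGaussCDF t * (1 - stdGaussCDF t)) + pdf t * (1 - 2 * stdGaussCDF t)
    + stdGaussCDF (Real.sqrt 2 * t) / Real.sqrt Real.pi

lemma hasDerivAt_H (t : ℝ) :
    HasDerivAt H (stdGaussCDF t * (1 - stdGaussCDF t)) t := by
  have A : HasDerivAt (fun t : ℝ => t * (stdGaussCDF t * (1 - stdGaussCDF t)))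
      (1 * (stdGaussCDF t * (1 - stdGaussCDF t)) +
        t * (pdf t * (1 - stdGaussCDF t) + stdGaussCDF t * (0 - pdf t))) t :=
    (hasDerivAt_id t).mul
      ((hasDerivAt_cdf t).mul ((hasDerivAt_const t 1).sub (hasDerivAt_cdf t)))
  have B : HasDerivAt (fun t : ℝ => pdf t * (1 - 2 * stdGaussCDF t))
      (-(t * pdf t) * (1 - 2 * stdGaussCDF t) + pdf t * (0 - 2 * pdf t)) t :=
    (hasDerivAt_pdf t).mul
      ((hasDerivAt_const t 1).sub ((hasDerivAt_cdf t).const_mul 2))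
  have C0 : HasDerivAt (fun t : ℝ => stdGaussCDF (Real.sqrt 2 * t))
      (pdf (Real.sqrt 2 * t) * Real.sqrt 2) t := by
    have hin : HasDerivAt (fun x : ℝ => Real.sqrt 2 * x) (Real.sqrt 2) t := by
      simpa using (hasDerivAt_id t).const_mul (Real.sqrt 2)
    have := (hasDerivAt_cdf (Real.sqrt 2 * t)).comp t hin
    simpa [Function.comp_def] using this
  have C := C0.div_const (Real.sqrt Real.pi)
  have := (A.add B).add C
  refine this.congr_deriv ?_
  rw [pdf_sqrt_two]
  ring

lemma tendsto_H_atTop : Tendsto H atTop (𝓝 (1 / Real.sqrt Real.pi)) := by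
  have h1 : Tendsto (fun t : ℝ => t * (stdGaussCDF t * (1 - stdGaussCDF t))) atTop (𝓝 0) := by
    refine squeeze_zero_norm' ?_ tendsto_mul_cdf
    filter_upwards [eventually_gt_atTop 0] with t ht
    rw [Real.norm_eq_abs, abs_of_nonneg (by
      nlinarith [cdf_nonneg t, cdf_le_one t, mul_nonneg (mul_nonneg ht.le (cdf_nonneg t))
        (sub_nonneg.2 (cdf_le_one t))])]
    rw [cdf_neg_eq]
    nlinarith [mul_nonneg (mul_nonneg ht.le (sub_nonneg.2 (cdf_le_one t)))
      (sub_nonneg.2 (cdf_le_one t))]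
  have h2 : Tendsto (fun t : ℝ => pdf t * (1 - 2 * stdGaussCDF t)) atTop (𝓝 0) := by
    have := tendsto_pdf_atTop.mul
      (((tendsto_const_nhds : Tendsto (fun _ : ℝ => (1:ℝ)) atTop (𝓝 1))).sub
        (tendsto_cdf_atTop.const_mul 2))
    simpa using this
  have h3 : Tendsto (fun t : ℝ => stdGaussCDF (Real.sqrt 2 * t) / Real.sqrt Real.pi) atTop
      (𝓝 (1 / Real.sqrt Real.pi)) := by
    apply Tendsto.div_const
    exact tendsto_cdf_atTop.comp
      (Tendsto.const_mul_atTop (Real.sqrt_pos.mpr (by norm_num)) tendsto_id)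
  have := (h1.add h2).add h3
  unfold H
  simpa using this

lemma tendsto_H_atBot : Tendsto H atBot (𝓝 0) := by
  have hneg : Tendsto (fun t : ℝ => -(t * stdGaussCDF t)) atBot (𝓝 0) := by
    have := tendsto_mul_cdf.comp tendsto_neg_atBot_atTop
    refine this.congr fun t => ?_
    simp only [Function.comp_apply, neg_neg]
    ring
  have h1 : Tendsto (fun t : ℝ => t * (stdGaussCDF t * (1 - stdGaussCDF t))) atBot (𝓝 0) := by
    refine squeeze_zero_norm' ?_ hneg
    filter_upwards [eventually_lt_atBot 0] with t ht
    rw [Real.norm_eq_abs, abs_of_nonpos (by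
      nlinarith [mul_nonneg (neg_nonneg.mpr ht.le)
        (mul_nonneg (cdf_nonneg t) (sub_nonneg.2 (cdf_le_one t)))])]
    nlinarith [mul_nonneg (mul_nonneg (neg_nonneg.mpr ht.le) (cdf_nonneg t)) (cdf_nonneg t)]
  have h2 : Tendsto (fun t : ℝ => pdf t * (1 - 2 * stdGaussCDF t)) atBot (𝓝 0) := by
    have := tendsto_pdf_atBot.mul
      (((tendsto_const_nhds : Tendsto (fun _ : ℝ => (1:ℝ)) atBot (𝓝 1))).sub
        (tendsto_cdf_atBot.const_mul 2))
    simpa using this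
  have h3 : Tendsto (fun t : ℝ => stdGaussCDF (Real.sqrt 2 * t) / Real.sqrt Real.pi) atBot
      (𝓝 0) := by
    rw [show (0:ℝ) = 0 / Real.sqrt Real.pi by simp]
    apply Tendsto.div_const
    refine tendsto_cdf_atBot.comp ?_
    exact Tendsto.const_mul_atBot (Real.sqrt_pos.mpr (by norm_num)) tendsto_id
  have := (h1.add h2).add h3
  unfold H
  simpa using this

lemma integrable_h : Integrable (fun t => stdGaussCDF t * (1 - stdGaussCDF t)) := by
  apply Integrable.mono'
    (g := fun t => pdf t + indicator (Icc (-1:ℝ) 1) (fun _ => (1:ℝ)) t)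
  · exact integrable_pdf.add
      ((integrable_indicator_iff measurableSet_Icc).2
        (integrableOn_const measure_Icc_lt_top.ne))
  · exact (continuous_cdf.mul (continuous_const.sub continuous_cdf)).aestronglyMeasurable
  · refine Eventually.of_forall fun t => ?_
    rw [Real.norm_eq_abs, abs_of_nonneg (by nlinarith [cdf_nonneg t, cdf_le_one t])]
    rcases le_or_gt |t| 1 with h | h
    · rw [abs_le] at h
      have : indicator (Icc (-1:ℝ) 1) (fun _ => (1:ℝ)) t = 1 :=
        indicator_of_mem (show t ∈ Icc (-1:ℝ) 1 from ⟨h.1, h.2⟩) _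
      rw [this]
      nlinarith [cdf_nonneg t, cdf_le_one t, pdf_nonneg t]
    · have hind : (0:ℝ) ≤ indicator (Icc (-1:ℝ) 1) (fun _ => (1:ℝ)) t :=
        indicator_nonneg (fun _ _ => zero_le_one) t
      have key : stdGaussCDF t * (1 - stdGaussCDF t) ≤ pdf t := by
        rcases lt_abs.mp h with h1 | h1
        · -- t > 1
          have := mul_cdf_le t (by linarith)
          rw [cdf_neg_eq] at this
          nlinarith [cdf_nonneg t, cdf_le_one t, cdf_nonneg (-t)]
        · -- t < -1
          have := mul_cdf_le (-t) (by linarith)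
          rw [neg_neg, pdf_even] at this
          nlinarith [cdf_nonneg t, cdf_le_one t]
      linarith
end SG

/-- `∫ Φ(t)·Φ(−t) dt = 1/√π`. -/
theorem integral_gaussCDF_mul_gaussCDF_neg :
    ∫ t : ℝ, stdGaussCDF t * stdGaussCDF (-t) = 1 / Real.sqrt Real.pi := by
  simp only [SG.cdf_neg_eq]
  rw [MeasureTheory.integral_of_hasDerivAt_of_tendsto SG.hasDerivAt_H SG.integrable_h
    SG.tendsto_H_atBot SG.tendsto_H_atTop]
  simp
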